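/- Let p be a prime and let Γ be a discrete cocompact subgroup of SL(2, ℚ_p). Then Γ contains no nontrivial unipotent element: if γ ∈ Γ satisfies (γ − 1)² = 0 as a 2×2 matrix over ℚ_p, then γ = 1. -/

import Mathlib

open Matrix Filter Topology

/-- The topology on the special linear group induced from the matrix topology. -/
instance specialLinearGroupTopology {n : Type*} [DecidableEq n] [Fintype n]
    {R : Type*} [CommRing R] [TopologicalSpace R] :
    TopologicalSpace (SpecialLinearGroup n R) :=
  TopologicalSpace.induced (fun g => (g : Matrix n n R)) inferInstance

/-- A discrete cocompact subgroup of `SL(2, ℚ_p)` contains no nontrivial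
unipotent element. -/
theorem stmt_2 (p : ℕ) [Fact p.Prime]
    (Γ : Subgroup (SpecialLinearGroup (Fin 2) ℚ_[p]))
    (hdisc : DiscreteTopology Γ)
    (hcocompact : ∃ K : Set (SpecialLinearGroup (Fin 2) ℚ_[p]), IsCompact K ∧
      ∀ g : SpecialLinearGroup (Fin 2) ℚ_[p], ∃ k ∈ K, ∃ γ ∈ Γ, g = k * γ)
    (γ : SpecialLinearGroup (Fin 2) ℚ_[p]) (hγ : γ ∈ Γ)
    (hunip : ((γ : Matrix (Fin 2) (Fin 2) ℚ_[p]) - 1) ^ 2 = 0) :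
    γ = 1 := by
  obtain ⟨K, hK, hKΓ⟩ := hcocompact
  set A : Matrix (Fin 2) (Fin 2) ℚ_[p] := (γ : Matrix (Fin 2) (Fin 2) ℚ_[p]) with hAdef
  -- entrywise consequences of unipotency
  have hsq : ∀ i j, ((A - 1) * (A - 1)) i j = 0 := by
    intro i j
    rw [← sq, hunip]
    simp
  have e00 : (A 0 0 - 1) * (A 0 0 - 1) + A 0 1 * A 1 0 = 0 := by
    have := hsq 0 0
    simpa [Matrix.mul_apply, Fin.sum_univ_two, Matrix.sub_apply, Matrix.one_apply] using this
  have e01 : (A 0 0 - 1) * A 0 1 + A 0 1 * (A 1 1 - 1) = 0 := by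
    have := hsq 0 1
    simpa [Matrix.mul_apply, Fin.sum_univ_two, Matrix.sub_apply, Matrix.one_apply] using this
  have e10 : A 1 0 * (A 0 0 - 1) + (A 1 1 - 1) * A 1 0 = 0 := by
    have := hsq 1 0
    simpa [Matrix.mul_apply, Fin.sum_univ_two, Matrix.sub_apply, Matrix.one_apply] using this
  have e11 : A 1 0 * A 0 1 + (A 1 1 - 1) * (A 1 1 - 1) = 0 := by
    have := hsq 1 1
    simpa [Matrix.mul_apply, Fin.sum_univ_two, Matrix.sub_apply, Matrix.one_apply] using this
  -- trace is 2
  have htr : A 0 0 + A 1 1 = 2 := by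
    by_contra h
    have hb : A 0 1 = 0 := by
      rcases mul_eq_zero.mp (show A 0 1 * (A 0 0 + A 1 1 - 2) = 0 by linear_combination e01)
        with h' | h'
      · exact h'
      · exact absurd (by linear_combination h') h
    have hc : A 1 0 = 0 := by
      rcases mul_eq_zero.mp (show A 1 0 * (A 0 0 + A 1 1 - 2) = 0 by linear_combination e10)
        with h' | h'
      · exact h'
      · exact absurd (by linear_combination h') h
    have ha : A 0 0 = 1 := by
      have h2 : (A 0 0 - 1) * (A 0 0 - 1) = 0 := by linear_combination e00 - A 0 1 * hc
      have := mul_self_eq_zero.mp h2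
      linear_combination this
    have hd : A 1 1 = 1 := by
      have h2 : (A 1 1 - 1) * (A 1 1 - 1) = 0 := by linear_combination e11 - A 0 1 * hc
      have := mul_self_eq_zero.mp h2
      linear_combination this
    exact h (by rw [ha, hd]; norm_num)
  have hAmat : A = !![A 0 0, A 0 1; A 1 0, 2 - A 0 0] := by
    ext i j
    fin_cases i <;> fin_cases j <;> simp
    linear_combination htr
  -- conjugate γ into upper triangular unipotent form
  obtain ⟨H, e, hkey⟩ : ∃ (H : SpecialLinearGroup (Fin 2) ℚ_[p]) (e : ℚ_[p]),
      (H : Matrix (Fin 2) (Fin 2) ℚ_[p]) * A *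
        ((H⁻¹ : SpecialLinearGroup (Fin 2) ℚ_[p]) : Matrix (Fin 2) (Fin 2) ℚ_[p])
        = !![1, e; 0, 1] := by
    by_cases hc : A 1 0 = 0
    · have ha : A 0 0 = 1 := by
        have h2 : (A 0 0 - 1) * (A 0 0 - 1) = 0 := by linear_combination e00 - A 0 1 * hc
        have := mul_self_eq_zero.mp h2
        linear_combination this
      refine ⟨1, A 0 1, ?_⟩
      rw [inv_one]
      simp only [Matrix.SpecialLinearGroup.coe_one, one_mul, mul_one]
      rw [hAmat, ha, hc]
      norm_num
    · have hdetH : Matrix.det !![0, (A 1 0)⁻¹; -(A 1 0), A 0 0 - 1] = 1 := by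
        rw [Matrix.det_fin_two_of]
        field_simp
        ring
      refine ⟨⟨_, hdetH⟩, -(A 1 0)⁻¹, ?_⟩
      have hinv : (((⟨_, hdetH⟩ : SpecialLinearGroup (Fin 2) ℚ_[p])⁻¹ :
          SpecialLinearGroup (Fin 2) ℚ_[p]) : Matrix (Fin 2) (Fin 2) ℚ_[p])
          = !![A 0 0 - 1, -(A 1 0)⁻¹; A 1 0, 0] := by
        erw [Matrix.SpecialLinearGroup.coe_inv]
        show Matrix.adjugate !![0, (A 1 0)⁻¹; -(A 1 0), A 0 0 - 1] = _
        rw [Matrix.adjugate_fin_two_of]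
        norm_num
      rw [hinv]
      show !![0, (A 1 0)⁻¹; -(A 1 0), A 0 0 - 1] * A * _ = _
      rw [hAmat]
      ext i j
      fin_cases i <;> fin_cases j <;>
        simp [Matrix.mul_apply, Fin.sum_univ_two] <;>
        first
          | linear_combination (-(A 1 0)) * e00
          | ring
          | (field_simp; try norm_num)
      all_goals
        first
          | exact mul_inv_cancel₀ hc
          | rw [sq, ← mul_assoc, mul_inv_cancel₀ hc, one_mul]
  -- the diagonal conjugators
  set q : ℚ_[p] := (p : ℚ_[p]) with hqdef
  have hq : q ≠ 0 := by
    have := (Fact.out : p.Prime).ne_zero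
    exact_mod_cast Nat.cast_ne_zero.mpr this
  have hqn : ∀ n : ℕ, q ^ n ≠ 0 := fun n => pow_ne_zero n hq
  have hdetD : ∀ n : ℕ, Matrix.det !![q ^ n, 0; 0, (q ^ n)⁻¹] = 1 := by
    intro n
    rw [Matrix.det_fin_two_of]
    field_simp
    ring
  let D : ℕ → SpecialLinearGroup (Fin 2) ℚ_[p] := fun n => ⟨_, hdetD n⟩
  have hDcoe : ∀ n : ℕ, ((D n : SpecialLinearGroup (Fin 2) ℚ_[p]) :
      Matrix (Fin 2) (Fin 2) ℚ_[p]) = !![q ^ n, 0; 0, (q ^ n)⁻¹] := fun n => rfl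
  have hG : ∀ n : ℕ,
      ((D n * H * γ * (D n * H)⁻¹ : SpecialLinearGroup (Fin 2) ℚ_[p]) :
        Matrix (Fin 2) (Fin 2) ℚ_[p])
        = !![1, (q ^ 2) ^ n * e; 0, 1] := by
    intro n
    have hDinv : (((D n)⁻¹ : SpecialLinearGroup (Fin 2) ℚ_[p]) :
        Matrix (Fin 2) (Fin 2) ℚ_[p]) = !![(q ^ n)⁻¹, 0; 0, q ^ n] := by
      rw [Matrix.SpecialLinearGroup.coe_inv, hDcoe, Matrix.adjugate_fin_two_of]
      norm_num
    rw [_root_.mul_inv_rev]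
    simp only [Matrix.SpecialLinearGroup.coe_mul]
    rw [mul_assoc ((D n : SpecialLinearGroup (Fin 2) ℚ_[p]) :
        Matrix (Fin 2) (Fin 2) ℚ_[p]), mul_assoc ((D n : SpecialLinearGroup (Fin 2) ℚ_[p]) :
        Matrix (Fin 2) (Fin 2) ℚ_[p]),
      ← mul_assoc ((H : Matrix (Fin 2) (Fin 2) ℚ_[p]) * (γ : Matrix (Fin 2) (Fin 2) ℚ_[p]))]
    have hkey' : (H : Matrix (Fin 2) (Fin 2) ℚ_[p]) * (γ : Matrix (Fin 2) (Fin 2) ℚ_[p]) *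
        ((H⁻¹ : SpecialLinearGroup (Fin 2) ℚ_[p]) : Matrix (Fin 2) (Fin 2) ℚ_[p])
        = !![1, e; 0, 1] := hAdef ▸ hkey
    rw [hkey', hDinv, hDcoe]
    ext i j
    fin_cases i <;> fin_cases j <;>
      simp [Matrix.mul_apply, Fin.sum_univ_two, hqn n] <;>
      ring
  -- matrix-level convergence of the conjugates to 1
  have hcont : Continuous (fun t : ℚ_[p] => !![(1 : ℚ_[p]), t; 0, 1]) := by
    apply continuous_matrix
    intro i j
    fin_cases i <;> fin_cases j <;> simp <;>
      first
        | exact continuous_const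
        | exact continuous_id
  have hlim0 : Tendsto (fun n : ℕ => (q ^ 2) ^ n * e) atTop (𝓝 0) := by
    have hp1 : (1 : ℝ) < p := by exact_mod_cast (Fact.out : p.Prime).one_lt
    have h1 : ‖q‖ < 1 := by
      rw [hqdef, Padic.norm_p]
      rw [inv_lt_one_iff₀]
      right
      exact hp1
    have hnorm : ‖q ^ 2‖ < 1 := by
      rw [norm_pow]
      exact pow_lt_one₀ (norm_nonneg _) h1 two_ne_zero
    simpa using (tendsto_pow_atTop_nhds_zero_of_norm_lt_one hnorm).mul_const e
  have hsmat : Tendsto (fun n : ℕ => ((D n * H * γ * (D n * H)⁻¹ :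
      SpecialLinearGroup (Fin 2) ℚ_[p]) : Matrix (Fin 2) (Fin 2) ℚ_[p])) atTop
      (𝓝 (1 : Matrix (Fin 2) (Fin 2) ℚ_[p])) := by
    have h2 := (hcont.tendsto 0).comp hlim0
    have h3 : (1 : Matrix (Fin 2) (Fin 2) ℚ_[p]) = !![(1:ℚ_[p]), 0; 0, 1] :=
      Matrix.one_fin_two
    rw [h3]
    exact Filter.Tendsto.congr (fun n => (hG n).symm) h2
  -- first countability and the compactness argument
  have hInd : Topology.IsInducing (fun g : SpecialLinearGroup (Fin 2) ℚ_[p] =>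
      (g : Matrix (Fin 2) (Fin 2) ℚ_[p])) := ⟨rfl⟩
  haveI : FirstCountableTopology (Matrix (Fin 2) (Fin 2) ℚ_[p]) :=
    inferInstanceAs (FirstCountableTopology (Fin 2 → Fin 2 → ℚ_[p]))
  haveI : FirstCountableTopology (SpecialLinearGroup (Fin 2) ℚ_[p]) :=
    ⟨fun a => by
      rw [hInd.nhds_eq_comap]
      exact Filter.comap.isCountablyGenerated _ _⟩
  choose k hkK δ hδΓ hfac using fun n => hKΓ (D n * H)
  obtain ⟨k₀, hk₀K, φ, hφ, hkconv⟩ := hK.tendsto_subseq hkK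
  have hconj : ∀ n, δ n * γ * (δ n)⁻¹ =
      (k n)⁻¹ * (D n * H * γ * (D n * H)⁻¹) * k n := by
    intro n
    rw [hfac n]
    group
  have hkmat : Tendsto (fun i => ((k (φ i) : SpecialLinearGroup (Fin 2) ℚ_[p]) :
      Matrix (Fin 2) (Fin 2) ℚ_[p])) atTop
      (𝓝 ((k₀ : SpecialLinearGroup (Fin 2) ℚ_[p]) : Matrix (Fin 2) (Fin 2) ℚ_[p])) :=
    (hInd.continuous.tendsto k₀).comp hkconv
  have hadj : Tendsto (fun i => Matrix.adjugate
      ((k (φ i) : SpecialLinearGroup (Fin 2) ℚ_[p]) : Matrix (Fin 2) (Fin 2) ℚ_[p]))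
      atTop (𝓝 (Matrix.adjugate
        ((k₀ : SpecialLinearGroup (Fin 2) ℚ_[p]) : Matrix (Fin 2) (Fin 2) ℚ_[p]))) :=
    ((continuous_id.matrix_adjugate).tendsto _).comp hkmat
  have hsφ : Tendsto (fun i => ((D (φ i) * H * γ * (D (φ i) * H)⁻¹ :
      SpecialLinearGroup (Fin 2) ℚ_[p]) : Matrix (Fin 2) (Fin 2) ℚ_[p])) atTop
      (𝓝 (1 : Matrix (Fin 2) (Fin 2) ℚ_[p])) :=
    hsmat.comp hφ.tendsto_atTop
  have hlim1 : Matrix.adjugate ((k₀ : SpecialLinearGroup (Fin 2) ℚ_[p]) :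
      Matrix (Fin 2) (Fin 2) ℚ_[p]) * (1 : Matrix (Fin 2) (Fin 2) ℚ_[p]) *
      ((k₀ : SpecialLinearGroup (Fin 2) ℚ_[p]) : Matrix (Fin 2) (Fin 2) ℚ_[p]) = 1 := by
    rw [mul_one, ← Matrix.SpecialLinearGroup.coe_inv, ← Matrix.SpecialLinearGroup.coe_mul,
      inv_mul_cancel, Matrix.SpecialLinearGroup.coe_one]
  have htmat : Tendsto (fun i => ((δ (φ i) * γ * (δ (φ i))⁻¹ :
      SpecialLinearGroup (Fin 2) ℚ_[p]) : Matrix (Fin 2) (Fin 2) ℚ_[p])) atTop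
      (𝓝 (1 : Matrix (Fin 2) (Fin 2) ℚ_[p])) := by
    have hmul := (hadj.mul hsφ).mul hkmat
    rw [hlim1] at hmul
    refine Filter.Tendsto.congr (fun i => ?_) hmul
    rw [hconj (φ i)]
    simp only [Matrix.SpecialLinearGroup.coe_mul, Matrix.SpecialLinearGroup.coe_inv]
  have htSL : Tendsto (fun i => δ (φ i) * γ * (δ (φ i))⁻¹) atTop
      (𝓝 (1 : SpecialLinearGroup (Fin 2) ℚ_[p])) := by
    rw [hInd.tendsto_nhds_iff]
    exact htmat
  have hmem : ∀ i, δ (φ i) * γ * (δ (φ i))⁻¹ ∈ Γ := fun i =>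
    Γ.mul_mem (Γ.mul_mem (hδΓ (φ i)) hγ) (Γ.inv_mem (hδΓ (φ i)))
  have hTΓ : Tendsto (fun i => (⟨δ (φ i) * γ * (δ (φ i))⁻¹, hmem i⟩ : Γ)) atTop
      (𝓝 (1 : Γ)) := by
    rw [Topology.IsInducing.tendsto_nhds_iff Topology.IsInducing.subtypeVal]
    exact htSL
  have h1mem : ({(1 : Γ)} : Set Γ) ∈ 𝓝 (1 : Γ) :=
    (isOpen_discrete _).mem_nhds rfl
  obtain ⟨i, hi⟩ := Filter.nonempty_of_mem (Filter.mem_map.mp (hTΓ h1mem))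
  have hone : δ (φ i) * γ * (δ (φ i))⁻¹ = 1 := by
    simpa [Subtype.ext_iff] using hi
  calc γ = (δ (φ i))⁻¹ * (δ (φ i) * γ * (δ (φ i))⁻¹) * δ (φ i) := by group
  _ = 1 := by rw [hone]; group
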